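/- A complete simple game with minimal winning coalitions W and maximal losing coalitions L is weighted if and only if the linear system ∑_i u_i w_i ≥ q for all u ∈ W, ∑_i v_i w_i ≤ q − 1 for all v ∈ L, w_1 ≥ w_2 ≥ … ≥ w_n ≥ 0, q ≥ 0 has a rational solution; moreover any real solution can be scaled to an integer solution. -/

import Mathlib

open Finset

/-- The prefix-sum order on Boolean coalition vectors. -/
def PrefLe {n : ℕ} (u v : Fin n → Bool) : Prop :=
  ∀ k : ℕ,
    ∑ i ∈ Finset.univ.filter (fun i : Fin n => (i : ℕ) < k), (if u i then 1 else 0) ≤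
    ∑ i ∈ Finset.univ.filter (fun i : Fin n => (i : ℕ) < k), (if v i then (1 : ℕ) else 0)

/-- A complete simple game for the fixed ordering `1 ⊒ … ⊒ n`. -/
def CompleteSG {n : ℕ} (χ : (Fin n → Bool) → Bool) : Prop :=
  χ (fun _ => false) = false ∧ χ (fun _ => true) = true ∧
    ∀ u v : Fin n → Bool, PrefLe u v → χ u ≤ χ v

/-- The set of ⪯-minimal winning coalitions of `χ`. -/
def MinWinning {n : ℕ} (χ : (Fin n → Bool) → Bool) : Set (Fin n → Bool) :=
  {u | χ u = true ∧ ∀ v, PrefLe v u → v ≠ u → χ v = false}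

/-- The set of ⪯-maximal losing coalitions of `χ`. -/
def MaxLosing {n : ℕ} (χ : (Fin n → Bool) → Bool) : Set (Fin n → Bool) :=
  {v | χ v = false ∧ ∀ u, PrefLe v u → u ≠ v → χ u = true}

/-- The linear system `∑ u_i w_i ≥ q` for all `u ∈ W`,
`∑ v_i w_i ≤ q - 1` for all `v ∈ L`, `w_1 ≥ … ≥ w_n ≥ 0`, `q ≥ 0`. -/
def SystemSol {n : ℕ} {R : Type*} [Field R] [LinearOrder R] [IsStrictOrderedRing R]
    (χ : (Fin n → Bool) → Bool) (w : Fin n → R) (q : R) : Prop :=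
  (∀ u ∈ MinWinning χ, q ≤ ∑ i, (if u i then w i else 0)) ∧
  (∀ v ∈ MaxLosing χ, ∑ i, (if v i then w i else 0) ≤ q - 1) ∧
  (∀ i j : Fin n, i ≤ j → w j ≤ w i) ∧ (∀ i, 0 ≤ w i) ∧ 0 ≤ q

/-- `χ` is a weighted voting game. -/
def IsWeighted {n : ℕ} (χ : (Fin n → Bool) → Bool) : Prop :=
  ∃ (w : Fin n → ℝ) (q : ℝ), (∀ i, 0 ≤ w i) ∧
    (∀ i j : Fin n, i ≤ j → w j ≤ w i) ∧ 0 < q ∧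
    ∀ u : Fin n → Bool, χ u = true ↔ q ≤ ∑ i, (if u i then w i else 0)

namespace SGaux
variable {n : ℕ}

def pc (u : Fin n → Bool) (k : ℕ) : ℕ :=
  ∑ i ∈ Finset.univ.filter (fun i : Fin n => (i : ℕ) < k), (if u i then 1 else 0)

lemma prefLe_iff (u v : Fin n → Bool) : PrefLe u v ↔ ∀ k, pc u k ≤ pc v k := Iff.rfl

lemma prefLe_refl (u : Fin n → Bool) : PrefLe u u := fun _ => le_rfl

lemma prefLe_trans {u v x : Fin n → Bool} (h1 : PrefLe u v) (h2 : PrefLe v x) : PrefLe u x :=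
  fun k => (h1 k).trans (h2 k)

lemma pc_succ (u : Fin n → Bool) (m : ℕ) :
    pc u (m+1) = pc u m + (if h : m < n then (if u ⟨m,h⟩ then 1 else 0) else 0) := by
  by_cases h : m < n
  · rw [dif_pos h]
    have hins : Finset.univ.filter (fun i : Fin n => (i : ℕ) < m+1)
        = insert ⟨m,h⟩ (Finset.univ.filter (fun i : Fin n => (i : ℕ) < m)) := by
      ext i
      simp only [Finset.mem_filter, Finset.mem_univ, true_and, Finset.mem_insert]
      constructor
      · intro hi
        rcases Nat.lt_succ_iff_lt_or_eq.mp hi with h' | h'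
        · exact Or.inr h'
        · exact Or.inl (Fin.ext h')
      · rintro (rfl | h')
        · exact Nat.lt_succ_self m
        · exact h'.trans (Nat.lt_succ_self m)
    rw [pc, pc, hins, Finset.sum_insert (by simp)]
    ring
  · rw [dif_neg h, add_zero]
    unfold pc
    congr 1
    ext i
    simp only [Finset.mem_filter, Finset.mem_univ, true_and]
    have : (i : ℕ) < n := i.isLt
    constructor <;> intro <;> omega

lemma pc_le (u : Fin n → Bool) (k : ℕ) : pc u k ≤ n := by
  calc pc u k ≤ ∑ i ∈ Finset.univ.filter (fun i : Fin n => (i : ℕ) < k), 1 := by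
        apply Finset.sum_le_sum; intro i _; split <;> omega
    _ ≤ ∑ _i : Fin n, 1 := Finset.sum_le_sum_of_subset (Finset.filter_subset _ _)
    _ = n := by simp

def Mm (u : Fin n → Bool) : ℕ := ∑ k ∈ Finset.range (n+1), pc u k

lemma Mm_le (u : Fin n → Bool) : Mm u ≤ (n+1) * n := by
  calc Mm u ≤ ∑ _k ∈ Finset.range (n+1), n := Finset.sum_le_sum fun k _ => pc_le u k
    _ = (n+1) * n := by simp [mul_comm]

lemma Mm_strict {u v : Fin n → Bool} (h' : PrefLe u v) (hne : u ≠ v) : Mm u < Mm v := by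
  have h : ∀ k, pc u k ≤ pc v k := h'
  have hex : ∃ i : Fin n, u i ≠ v i := by
    by_contra hc
    push_neg at hc
    exact hne (funext hc)
  obtain ⟨i, hi⟩ := hex
  have key : ∃ k ∈ Finset.range (n+1), pc u k < pc v k := by
    rcases lt_or_eq_of_le (h (i : ℕ)) with hq | hq
    · exact ⟨i, by simp only [Finset.mem_range]; omega, hq⟩
    · refine ⟨(i : ℕ) + 1, by simp only [Finset.mem_range]; omega, ?_⟩
      have hlt : ((i : ℕ)) < n := i.isLt
      have h1 := pc_succ u (i : ℕ)
      have h2 := pc_succ v (i : ℕ)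
      rw [dif_pos hlt] at h1 h2
      have hiu : (⟨(i:ℕ), hlt⟩ : Fin n) = i := rfl
      rw [hiu] at h1 h2
      have hle := h ((i:ℕ)+1)
      have : pc u ((i:ℕ)+1) ≠ pc v ((i:ℕ)+1) := by
        rw [h1, h2, hq]
        intro hcon
        have : (if u i then 1 else 0 : ℕ) = (if v i then 1 else 0) := by omega
        cases hu : u i <;> cases hv : v i <;> simp_all
      exact lt_of_le_of_ne hle this
  obtain ⟨k, hk, hklt⟩ := key
  exact Finset.sum_lt_sum (fun j _ => h j) ⟨k, hk, hklt⟩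

end SGaux

namespace SGaux
variable {n : ℕ} {χ : (Fin n → Bool) → Bool}

lemma exists_minWin : ∀ u : Fin n → Bool, χ u = true →
    ∃ m ∈ MinWinning χ, PrefLe m u := by
  suffices H : ∀ N : ℕ, ∀ u : Fin n → Bool, Mm u ≤ N → χ u = true →
      ∃ m ∈ MinWinning χ, PrefLe m u by
    intro u hu; exact H (Mm u) u le_rfl hu
  intro N
  induction N with
  | zero =>
    intro u hMu hu
    refine ⟨u, ⟨hu, ?_⟩, prefLe_refl u⟩
    intro v hv hne
    by_contra hc
    have : χ v = true := by
      cases h : χ v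
      · exact absurd h hc
      · rfl
    have := Mm_strict hv hne
    omega
  | succ N ih =>
    intro u hMu hu
    by_cases hmin : u ∈ MinWinning χ
    · exact ⟨u, hmin, prefLe_refl u⟩
    · have : ∃ v, PrefLe v u ∧ v ≠ u ∧ χ v = true := by
        by_contra hc
        push_neg at hc
        refine hmin ⟨hu, fun v hv hne => ?_⟩
        cases h : χ v
        · rfl
        · exact absurd h (hc v hv hne)
      obtain ⟨v, hvu, hne, hv⟩ := this
      have hlt := Mm_strict hvu hne
      obtain ⟨m, hm, hmv⟩ := ih v (by omega) hv
      exact ⟨m, hm, prefLe_trans hmv hvu⟩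

lemma exists_maxLose : ∀ u : Fin n → Bool, χ u = false →
    ∃ m ∈ MaxLosing χ, PrefLe u m := by
  suffices H : ∀ N : ℕ, ∀ u : Fin n → Bool, (n+1) * n - Mm u ≤ N → χ u = false →
      ∃ m ∈ MaxLosing χ, PrefLe u m by
    intro u hu; exact H ((n+1)*n) u (by omega) hu
  intro N
  induction N with
  | zero =>
    intro u hMu hu
    refine ⟨u, ⟨hu, ?_⟩, prefLe_refl u⟩
    intro v hv hne
    by_contra hc
    have hvf : χ v = false := by
      cases h : χ v
      · rfl
      · exact absurd h hc
    have h1 := Mm_strict hv hne.symm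
    have h2 := Mm_le v
    omega
  | succ N ih =>
    intro u hMu hu
    by_cases hmax : u ∈ MaxLosing χ
    · exact ⟨u, hmax, prefLe_refl u⟩
    · have : ∃ v, PrefLe u v ∧ v ≠ u ∧ χ v = false := by
        by_contra hc
        push_neg at hc
        refine hmax ⟨hu, fun v hv hne => ?_⟩
        cases h : χ v
        · exact absurd h (hc v hv hne)
        · rfl
      obtain ⟨v, huv, hne, hv⟩ := this
      have hlt2 : Mm u < Mm v := Mm_strict huv hne.symm
      obtain ⟨m, hm, hvm⟩ := ih v (by have := Mm_le v; omega) hv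
      exact ⟨m, hm, prefLe_trans huv hvm⟩

end SGaux

namespace SGaux
variable {n : ℕ}

lemma abel {R : Type*} [Field R] [LinearOrder R] [IsStrictOrderedRing R] (b w : ℕ → R) :
    ∀ N : ℕ, ∑ i ∈ Finset.range N, b i * w i =
      (∑ k ∈ Finset.range N, (w k - w (k+1)) * (∑ i ∈ Finset.range (k+1), b i)) +
        w N * ∑ i ∈ Finset.range N, b i := by
  intro N
  induction N with
  | zero => simp
  | succ N ih =>
    rw [Finset.sum_range_succ, ih, Finset.sum_range_succ (fun k => (w k - w (k+1)) * _),
      Finset.sum_range_succ b]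
    ring

variable {R : Type*} [Field R] [LinearOrder R] [IsStrictOrderedRing R]

/-- Extended weight function. -/
def Wext (w : Fin n → R) (i : ℕ) : R := if h : i < n then w ⟨i, h⟩ else 0

/-- Extended indicator function. -/
def Bext (u : Fin n → Bool) (i : ℕ) : R :=
  if h : i < n then (if u ⟨i, h⟩ then 1 else 0) else 0

lemma Bext_sum (u : Fin n → Bool) (m : ℕ) :
    ∑ i ∈ Finset.range m, (Bext u i : R) = (pc u m : ℕ) := by
  induction m with
  | zero => simp [pc]
  | succ m ih =>
    rw [Finset.sum_range_succ, ih, pc_succ]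
    unfold Bext
    by_cases h : m < n
    · rw [dif_pos h, dif_pos h]
      split <;> push_cast <;> ring
    · rw [dif_neg h, dif_neg h]
      push_cast; ring

lemma sum_eq_ext (u : Fin n → Bool) (w : Fin n → R) :
    ∑ i, (if u i then w i else 0) = ∑ i ∈ Finset.range n, (Bext u i : R) * Wext w i := by
  rw [Finset.sum_range fun i => (Bext u i : R) * Wext w i]
  apply Finset.sum_congr rfl
  intro i _
  unfold Bext Wext
  rw [dif_pos i.isLt, dif_pos i.isLt]
  simp only [Fin.eta]
  split <;> simp

lemma sum_mono {u v : Fin n → Bool} (w : Fin n → R)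
    (hmono : ∀ i j : Fin n, i ≤ j → w j ≤ w i) (hpos : ∀ i, 0 ≤ w i)
    (h : PrefLe u v) :
    ∑ i, (if u i then w i else 0) ≤ ∑ i, (if v i then w i else 0) := by
  have hpc : ∀ k, pc u k ≤ pc v k := h
  rw [sum_eq_ext u w, sum_eq_ext v w, abel (Bext u) (Wext w) n, abel (Bext v) (Wext w) n]
  have hWn : Wext w n = 0 := by unfold Wext; rw [dif_neg (lt_irrefl n)]
  rw [hWn, zero_mul, zero_mul, add_zero, add_zero]
  apply Finset.sum_le_sum
  intro k _
  apply mul_le_mul_of_nonneg_left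
  · rw [Bext_sum, Bext_sum]
    exact_mod_cast hpc (k+1)
  · unfold Wext
    by_cases h1 : k + 1 < n
    · rw [dif_pos h1, dif_pos (by omega : k < n)]
      have : (⟨k, by omega⟩ : Fin n) ≤ ⟨k+1, h1⟩ := by simp [Fin.le_def]
      linarith [hmono _ _ this]
    · rw [dif_neg h1]
      by_cases h2 : k < n
      · rw [dif_pos h2]; linarith [hpos ⟨k, h2⟩]
      · rw [dif_neg h2]; simp

end SGaux

namespace SGaux
variable {n : ℕ} {χ : (Fin n → Bool) → Bool} {R : Type*} [Field R] [LinearOrder R] [IsStrictOrderedRing R]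

lemma sum_nonneg' (u : Fin n → Bool) {w : Fin n → R} (hw : ∀ i, 0 ≤ w i) :
    0 ≤ ∑ i, (if u i then w i else 0) := by
  apply Finset.sum_nonneg
  intro i _
  split
  · exact hw i
  · exact le_refl 0

lemma q_ge_one {w : Fin n → R} {q : R} (hχ0 : χ (fun _ => false) = false)
    (hs : SystemSol χ w q) : 1 ≤ q := by
  obtain ⟨M, hM, _⟩ := exists_maxLose (χ := χ) (fun _ => false) hχ0
  have h1 := hs.2.1 M hM
  have h2 := sum_nonneg' M hs.2.2.2.1
  linarith

lemma sol_char {w : Fin n → R} {q : R} (hχ0 : χ (fun _ => false) = false)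
    (hs : SystemSol χ w q) (u : Fin n → Bool) :
    χ u = true ↔ q ≤ ∑ i, (if u i then w i else 0) := by
  obtain ⟨hW, hL, hmono, hpos, hq⟩ := hs
  constructor
  · intro hu
    obtain ⟨m, hm, hmu⟩ := exists_minWin u hu
    exact (hW m hm).trans (sum_mono w hmono hpos hmu)
  · intro hq'
    by_contra hc
    have hu : χ u = false := by
      cases h : χ u
      · rfl
      · exact absurd h hc
    obtain ⟨M, hM, huM⟩ := exists_maxLose u hu
    have := (sum_mono w hmono hpos huM).trans (hL M hM)
    linarith

/-- IsWeighted implies a real solution of the system. -/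
lemma weighted_to_sol (hχ0 : χ (fun _ => false) = false) (hw : IsWeighted χ) :
    ∃ (w : Fin n → ℝ) (q : ℝ), SystemSol χ w q := by
  obtain ⟨w, q, hpos, hmono, hq, hchar⟩ := hw
  classical
  set Lf : Finset (Fin n → Bool) := Finset.univ.filter (fun v => χ v = false) with hLf
  have hne : Lf.Nonempty := ⟨fun _ => false, by simp [hLf, hχ0]⟩
  set g : ℝ := Lf.inf' hne (fun v => q - ∑ i, (if v i then w i else 0)) with hg
  have hgpos : 0 < g := by
    rw [hg, Finset.lt_inf'_iff]
    intro v hv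
    have hvf : χ v = false := by simpa [hLf] using hv
    have : ¬ (q ≤ ∑ i, (if v i then w i else 0)) := by
      intro h
      rw [← hchar] at h
      simp [hvf] at h
    linarith [lt_of_not_ge this]
  have hsum : ∀ (u : Fin n → Bool), ∑ i, (if u i then w i / g else 0)
      = (∑ i, (if u i then w i else 0)) / g := by
    intro u
    rw [Finset.sum_div]
    apply Finset.sum_congr rfl
    intro i _
    split <;> simp
  have hglef : ∀ v, χ v = false → ∑ i, (if v i then w i else 0) ≤ q - g := by
    intro v hv
    have : g ≤ q - ∑ i, (if v i then w i else 0) := by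
      rw [hg]
      exact Finset.inf'_le _ (by simp [hLf, hv])
    linarith
  refine ⟨fun i => w i / g, q / g, ?_, ?_, ?_, ?_, ?_⟩
  · intro u hu
    rw [hsum]
    exact (div_le_div_iff_of_pos_right hgpos).mpr ((hchar u).mp hu.1)
  · intro v hv
    rw [hsum]
    have h1 := hglef v hv.1
    have h2 : (∑ i, (if v i then w i else 0)) / g ≤ (q - g) / g :=
      (div_le_div_iff_of_pos_right hgpos).mpr h1
    have h3 : (q - g) / g = q / g - 1 := by
      field_simp
    linarith
  · intro i j hij
    exact (div_le_div_iff_of_pos_right hgpos).mpr (hmono i j hij)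
  · intro i
    exact div_nonneg (hpos i) hgpos.le
  · exact div_nonneg hq.le hgpos.le

end SGaux

namespace SGaux
variable {n : ℕ} {χ : (Fin n → Bool) → Bool}

lemma real_to_rat {w : Fin n → ℝ} {q : ℝ} (hχ0 : χ (fun _ => false) = false)
    (hs : SystemSol χ w q) : ∃ (r : Fin n → ℚ) (qr : ℚ), SystemSol χ r qr := by
  obtain ⟨hW, hL, hmono, hpos, hq0⟩ := hs
  have hq1 : 1 ≤ q := q_ge_one hχ0 ⟨hW, hL, hmono, hpos, hq0⟩
  set N : ℕ := 2 * n + 2 with hN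
  have hNpos : 0 < (N : ℝ) := by positivity
  have hNq : 0 < (N : ℚ) := by positivity
  set r : Fin n → ℚ := fun i => ((⌈(N : ℝ) * (2 * w i)⌉ : ℤ) : ℚ) / N with hr
  set qr : ℚ := ((⌈(N : ℝ) * (2 * q - 1/2)⌉ : ℤ) : ℚ) / N with hqr
  -- basic bounds, in ℝ
  have cast_r : ∀ i, ((r i : ℚ) : ℝ) = ((⌈(N : ℝ) * (2 * w i)⌉ : ℤ) : ℝ) / N := by
    intro i; rw [hr]; push_cast; ring
  have cast_qr : ((qr : ℚ) : ℝ) = ((⌈(N : ℝ) * (2 * q - 1/2)⌉ : ℤ) : ℝ) / N := by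
    rw [hqr]; push_cast; ring
  have ceil_lb : ∀ x : ℝ, x ≤ ((⌈(N : ℝ) * x⌉ : ℤ) : ℝ) / N := by
    intro x
    rw [le_div_iff₀ hNpos]
    calc x * N = (N:ℝ) * x := by ring
      _ ≤ _ := Int.le_ceil _
  have ceil_ub : ∀ x : ℝ, ((⌈(N : ℝ) * x⌉ : ℤ) : ℝ) / N ≤ x + 1 / N := by
    intro x
    rw [div_le_iff₀ hNpos]
    have := Int.ceil_lt_add_one ((N:ℝ) * x)
    have : ((⌈(N : ℝ) * x⌉ : ℤ) : ℝ) ≤ (N:ℝ) * x + 1 := by linarith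
    calc ((⌈(N : ℝ) * x⌉ : ℤ) : ℝ) ≤ (N:ℝ) * x + 1 := this
      _ = (x + 1/N) * N := by field_simp
  have hr_lb : ∀ i, 2 * w i ≤ ((r i : ℚ) : ℝ) := by
    intro i; rw [cast_r]; exact ceil_lb _
  have hr_ub : ∀ i, ((r i : ℚ) : ℝ) ≤ 2 * w i + 1 / N := by
    intro i; rw [cast_r]; exact ceil_ub _
  have hqr_lb : 2 * q - 1/2 ≤ ((qr : ℚ) : ℝ) := by rw [cast_qr]; exact ceil_lb _
  have hqr_ub : ((qr : ℚ) : ℝ) ≤ 2 * q - 1/2 + 1 / N := by rw [cast_qr]; exact ceil_ub _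
  have hNhalf : (1 : ℝ) / N ≤ 1 / 2 := by
    rw [div_le_div_iff₀ hNpos (by norm_num)]
    have : (2 : ℝ) ≤ (N : ℝ) := by
      rw [hN]; push_cast; linarith [Nat.cast_nonneg (α := ℝ) n]
    linarith
  have hnN : (n : ℝ) * (1 / N) ≤ 1 / 2 := by
    rw [hN]
    have h2 : (0:ℝ) < 2 * (n:ℝ) + 2 := by positivity
    push_cast
    rw [mul_one_div, div_le_div_iff₀ h2 (by norm_num)]
    · linarith [Nat.cast_nonneg (α := ℝ) n]
  have cast_sum : ∀ (u : Fin n → Bool),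
      ((∑ i, (if u i then r i else 0) : ℚ) : ℝ) = ∑ i, (if u i then ((r i : ℚ) : ℝ) else 0) := by
    intro u
    rw [Rat.cast_sum]
    apply Finset.sum_congr rfl
    intro i _
    split <;> simp
  refine ⟨r, qr, ?_, ?_, ?_, ?_, ?_⟩
  · intro u hu
    rw [← Rat.cast_le (K := ℝ), cast_sum]
    have h1 : 2 * q ≤ ∑ i, (if u i then 2 * w i else 0) := by
      have h0 := hW u hu
      calc 2 * q ≤ 2 * ∑ i, (if u i then w i else 0) := by linarith
        _ = ∑ i, 2 * (if u i then w i else 0) := by rw [Finset.mul_sum]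
        _ = ∑ i, (if u i then 2 * w i else 0) := by
            apply Finset.sum_congr rfl; intro i _; split <;> ring
    have h2 : ∑ i, (if u i then 2 * w i else 0) ≤ ∑ i, (if u i then ((r i : ℚ) : ℝ) else 0) := by
      apply Finset.sum_le_sum; intro i _
      split
      · exact hr_lb i
      · exact le_rfl
    linarith
  · intro v hv
    rw [← Rat.cast_le (K := ℝ), Rat.cast_sub, Rat.cast_one, cast_sum]
    have h1 : ∑ i, (if v i then ((r i : ℚ) : ℝ) else 0)
        ≤ (∑ i, (if v i then 2 * w i else 0)) + (n : ℝ) * (1 / N) := by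
      calc ∑ i, (if v i then ((r i : ℚ) : ℝ) else 0)
          ≤ ∑ i, ((if v i then 2 * w i else 0) + 1 / N) := by
            apply Finset.sum_le_sum; intro i _
            split
            · calc ((r i : ℚ) : ℝ) ≤ 2 * w i + 1/N := hr_ub i
                _ = _ := by ring
            · positivity
        _ = (∑ i, (if v i then 2 * w i else 0)) + (n : ℝ) * (1 / N) := by
            rw [Finset.sum_add_distrib]
            simp [mul_comm]
    have h2 : ∑ i, (if v i then 2 * w i else 0) ≤ 2 * (q - 1) := by
      have := hL v hv
      calc ∑ i, (if v i then 2 * w i else 0) = 2 * ∑ i, (if v i then w i else 0) := by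
            rw [Finset.mul_sum]
            apply Finset.sum_congr rfl; intro i _; split <;> ring
        _ ≤ 2 * (q - 1) := by linarith
    linarith
  · intro i j hij
    have hc : (⌈(N:ℝ) * (2 * w j)⌉ : ℤ) ≤ ⌈(N:ℝ) * (2 * w i)⌉ := by
      apply Int.ceil_le_ceil
      have := hmono i j hij
      nlinarith
    show ((⌈(N : ℝ) * (2 * w j)⌉ : ℤ) : ℚ) / N ≤ ((⌈(N : ℝ) * (2 * w i)⌉ : ℤ) : ℚ) / N
    exact (div_le_div_iff_of_pos_right hNq).mpr (by exact_mod_cast hc)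
  · intro i
    show (0:ℚ) ≤ ((⌈(N : ℝ) * (2 * w i)⌉ : ℤ) : ℚ) / N
    apply div_nonneg _ hNq.le
    exact_mod_cast Int.ceil_nonneg (mul_nonneg hNpos.le (by linarith [hpos i]))
  · show (0:ℚ) ≤ ((⌈(N : ℝ) * (2 * q - 1/2)⌉ : ℤ) : ℚ) / N
    apply div_nonneg _ hNq.le
    exact_mod_cast Int.ceil_nonneg (mul_nonneg hNpos.le (by linarith))

end SGaux

namespace SGaux
variable {n : ℕ} {χ : (Fin n → Bool) → Bool}

lemma int_of_den_dvd (r : ℚ) (m : ℕ) (h : r.den ∣ m) : ∃ z : ℤ, (z : ℚ) = r * m := by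
  obtain ⟨c, hc⟩ := h
  refine ⟨r.num * c, ?_⟩
  have hden : (r.den : ℚ) ≠ 0 := by exact_mod_cast r.den_nz
  have key : r * (r.den : ℚ) = (r.num : ℚ) := by
    have h2 : ((r.num : ℚ) / (r.den : ℚ)) * (r.den : ℚ) = (r.num : ℚ) :=
      div_mul_cancel₀ _ hden
    rw [Rat.num_div_den] at h2
    exact h2
  subst hc
  push_cast
  calc (r.num : ℚ) * c = r * (r.den : ℚ) * c := by rw [key]
    _ = r * ((r.den : ℚ) * c) := by ring

lemma rat_to_int {w : Fin n → ℚ} {q : ℚ} (hs : SystemSol χ w q) :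
    ∃ (z : Fin n → ℤ) (zq : ℤ), SystemSol χ (fun i => (z i : ℚ)) ((zq : ℤ) : ℚ) := by
  obtain ⟨hW, hL, hmono, hpos, hq0⟩ := hs
  classical
  set D : ℕ := (∏ i, (w i).den) * q.den with hD
  have hDpos : 0 < D := by
    rw [hD]
    apply Nat.mul_pos
    · exact Finset.prod_pos fun i _ => (w i).pos
    · exact q.pos
  have hD1 : (1 : ℚ) ≤ D := by exact_mod_cast hDpos
  have hzi : ∀ i, ∃ z : ℤ, (z : ℚ) = w i * D := fun i =>
    int_of_den_dvd (w i) D (Dvd.dvd.mul_right (Finset.dvd_prod_of_mem _ (Finset.mem_univ i)) _)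
  choose z hz using hzi
  obtain ⟨zq, hzq⟩ := int_of_den_dvd q D (Dvd.dvd.mul_left dvd_rfl _)
  have hDnn : (0:ℚ) ≤ D := by positivity
  have hsum : ∀ (u : Fin n → Bool),
      ∑ i, (if u i then ((z i : ℤ) : ℚ) else 0) = (∑ i, (if u i then w i else 0)) * D := by
    intro u
    rw [Finset.sum_mul]
    apply Finset.sum_congr rfl
    intro i _
    split
    · exact hz i
    · ring
  refine ⟨z, zq, ?_, ?_, ?_, ?_, ?_⟩
  · intro u hu
    rw [hsum, hzq]
    exact mul_le_mul_of_nonneg_right (hW u hu) hDnn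
  · intro v hv
    rw [hsum, hzq]
    have h1 := mul_le_mul_of_nonneg_right (hL v hv) hDnn
    have : (q - 1) * (D:ℚ) = q * D - D := by ring
    linarith
  · intro i j hij
    show ((z j : ℤ) : ℚ) ≤ ((z i : ℤ) : ℚ)
    rw [hz i, hz j]
    exact mul_le_mul_of_nonneg_right (hmono i j hij) hDnn
  · intro i
    show (0:ℚ) ≤ ((z i : ℤ) : ℚ)
    rw [hz i]
    exact mul_nonneg (hpos i) hDnn
  · rw [hzq]
    exact mul_nonneg hq0 hDnn

end SGaux

namespace SGaux
variable {n : ℕ} {χ : (Fin n → Bool) → Bool}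

lemma rat_sol_to_real {w : Fin n → ℚ} {q : ℚ} (hs : SystemSol χ w q) :
    SystemSol χ (fun i => ((w i : ℚ) : ℝ)) ((q : ℚ) : ℝ) := by
  obtain ⟨hW, hL, hmono, hpos, hq0⟩ := hs
  have cast_sum : ∀ u : Fin n → Bool, ∑ i, (if u i then ((w i : ℚ) : ℝ) else 0)
      = ((∑ i, (if u i then w i else 0) : ℚ) : ℝ) := by
    intro u
    rw [Rat.cast_sum]
    apply Finset.sum_congr rfl
    intro i _
    split <;> simp
  refine ⟨?_, ?_, ?_, ?_, ?_⟩
  · intro u hu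
    rw [cast_sum]
    exact_mod_cast hW u hu
  · intro v hv
    rw [cast_sum]
    exact_mod_cast hL v hv
  · intro i j hij
    show ((w j : ℚ) : ℝ) ≤ ((w i : ℚ) : ℝ)
    exact_mod_cast hmono i j hij
  · intro i
    show (0:ℝ) ≤ ((w i : ℚ) : ℝ)
    exact_mod_cast hpos i
  · exact_mod_cast hq0

end SGaux

/-- A complete simple game is weighted iff the finite linear system built from
its minimal winning and maximal losing coalitions has a rational solution;
moreover any real solution can be scaled to an integer solution. -/
theorem stmt_12 (n : ℕ) (χ : (Fin n → Bool) → Bool) (hχ : CompleteSG χ) :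
    (IsWeighted χ ↔ ∃ (w : Fin n → ℚ) (q : ℚ), SystemSol χ w q) ∧
    (∀ (w : Fin n → ℝ) (q : ℝ), SystemSol χ w q →
      ∃ (w' : Fin n → ℤ) (q' : ℤ),
        SystemSol χ (fun i => (w' i : ℝ)) (q' : ℝ)) := by
  obtain ⟨hχ0, hχ1, hχm⟩ := hχ
  constructor
  · constructor
    · intro hw
      obtain ⟨w, q, hs⟩ := SGaux.weighted_to_sol hχ0 hw
      exact SGaux.real_to_rat hχ0 hs
    · rintro ⟨w, q, hs⟩
      have hs' := SGaux.rat_sol_to_real hs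
      have hq1 : (1 : ℝ) ≤ (q : ℚ) := SGaux.q_ge_one hχ0 hs'
      exact ⟨_, _, hs'.2.2.2.1, hs'.2.2.1, by linarith,
        fun u => SGaux.sol_char hχ0 hs' u⟩
  · intro w q hs
    obtain ⟨r, qr, hr⟩ := SGaux.real_to_rat hχ0 hs
    obtain ⟨z, zq, hz⟩ := SGaux.rat_to_int hr
    refine ⟨z, zq, ?_⟩
    have h := SGaux.rat_sol_to_real hz
    have he : (fun i => (((z i : ℤ) : ℚ) : ℝ)) = (fun i : Fin n => ((z i : ℤ) : ℝ)) := by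
      funext i; push_cast; rfl
    have he2 : (((zq : ℤ) : ℚ) : ℝ) = ((zq : ℤ) : ℝ) := by push_cast; rfl
    rw [he, he2] at h
    exact h
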